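/- Let a, b, c, d be purely imaginary quaternions with b ≠ a, c ≠ b, d ≠ c and d ≠ a, and let α, β ∈ ℝ with β ≠ 0. If the quaternionic cross-ratio satisfies q(a,b,c,d) = α/β (a real scalar), then α (b−a)/‖b−a‖² + β (c−b)/‖c−b‖² = β (d−a)/‖d−a‖² + α (c−d)/‖c−d‖². -/

import Mathlib

/-- The quaternionic cross-ratio `q(a,b,c,d) = (a−b)(b−c)⁻¹(c−d)(d−a)⁻¹`. -/
noncomputable def qcr (a b c d : Quaternion ℝ) : Quaternion ℝ :=
  (a - b) * (b - c)⁻¹ * (c - d) * (d - a)⁻¹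

/-- For a purely imaginary quaternion `x`, `(t/‖x‖²) • x = -(t • x⁻¹)`. -/
lemma aux_smul_inv (x : Quaternion ℝ) (hx : x.re = 0) (t : ℝ) :
    (t / ‖x‖ ^ 2) • x = -(t • x⁻¹) := by
  rw [Quaternion.inv_def, Quaternion.star_eq_neg.2 hx]
  rw [Quaternion.normSq_eq_norm_mul_self, ← sq]
  simp [smul_smul, div_eq_mul_inv]

/-- If an elementary quadrilateral of purely imaginary quaternions has
real factorized cross-ratio `α/β`, then
`α (b−a)/‖b−a‖² + β (c−b)/‖c−b‖² = β (d−a)/‖d−a‖² + α (c−d)/‖c−d‖²`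
(closedness of the 1-form defining the Christoffel dual). -/
theorem stmt_8 (a b c d : Quaternion ℝ)
    (ha : a.re = 0) (hb : b.re = 0) (hc : c.re = 0) (hd : d.re = 0)
    (hba : b ≠ a) (hcb : c ≠ b) (hdc : d ≠ c) (hda : d ≠ a)
    (α β : ℝ) (hβ : β ≠ 0)
    (hq : qcr a b c d = ((α / β : ℝ) : Quaternion ℝ)) :
    (α / ‖b - a‖ ^ 2) • (b - a) + (β / ‖c - b‖ ^ 2) • (c - b) =
      (β / ‖d - a‖ ^ 2) • (d - a) + (α / ‖c - d‖ ^ 2) • (c - d) := by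
  set u := b - a with hu_def
  set v := c - b with hv_def
  set w := c - d with hw_def
  set z := d - a with hz_def
  have hu : u ≠ 0 := sub_ne_zero.2 hba
  have hv : v ≠ 0 := sub_ne_zero.2 hcb
  have hw : w ≠ 0 := sub_ne_zero.2 hdc.symm
  have hz : z ≠ 0 := sub_ne_zero.2 hda
  have hur : u.re = 0 := by simp [hu_def, Quaternion.re_sub, ha, hb]
  have hvr : v.re = 0 := by simp [hv_def, Quaternion.re_sub, hb, hc]
  have hwr : w.re = 0 := by simp [hw_def, Quaternion.re_sub, hc, hd]
  have hzr : z.re = 0 := by simp [hz_def, Quaternion.re_sub, ha, hd]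
  -- key identity from the cross-ratio
  have h1 : u * v⁻¹ * w = ((α / β : ℝ) : Quaternion ℝ) * z := by
    have : (-u) * (-v)⁻¹ * w * z⁻¹ = ((α / β : ℝ) : Quaternion ℝ) := by
      rw [hu_def, hv_def, hw_def, hz_def]
      simpa [qcr, neg_sub] using hq
    simp only [inv_neg, mul_neg, neg_mul, neg_neg] at this
    calc u * v⁻¹ * w = u * v⁻¹ * w * z⁻¹ * z := by
          rw [inv_mul_cancel_right₀ hz]
      _ = ((α / β : ℝ) : Quaternion ℝ) * z := by rw [this]
  -- conjugated identity
  have h2 : w * v⁻¹ * u = ((α / β : ℝ) : Quaternion ℝ) * z := by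
    have := congrArg star h1
    rw [star_mul, star_mul, star_inv₀, Quaternion.star_eq_neg.2 hur,
      Quaternion.star_eq_neg.2 hvr, Quaternion.star_eq_neg.2 hwr, star_mul,
      Quaternion.star_eq_neg.2 hzr, Quaternion.star_coe] at this
    rw [← Quaternion.coe_commutes] at this
    simpa [mul_assoc, inv_neg] using this
  have hα : α ≠ 0 := by
    intro h
    apply mul_ne_zero (mul_ne_zero hu (inv_ne_zero hv)) hw
    rw [h1, h, zero_div, Quaternion.coe_zero, zero_mul]
  have hr : ((α / β : ℝ) : Quaternion ℝ) ≠ 0 := by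
    exact fun h => div_ne_zero hα hβ (Quaternion.coe_injective h)
  -- formula for z⁻¹
  have hzinv : z⁻¹ = u⁻¹ * v * w⁻¹ * ((α / β : ℝ) : Quaternion ℝ) := by
    have hz2 : z = (((α / β : ℝ) : Quaternion ℝ))⁻¹ * (w * v⁻¹ * u) := by
      rw [h2, ← mul_assoc, inv_mul_cancel₀ hr, one_mul]
    rw [hz2, mul_inv_rev, mul_inv_rev, mul_inv_rev, inv_inv, inv_inv]
    simp [mul_assoc]
  -- reduce goal
  rw [aux_smul_inv u hur, aux_smul_inv v hvr, aux_smul_inv w hwr, aux_smul_inv z hzr]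
  rw [← neg_add, ← neg_add, neg_inj]
  -- now: α • u⁻¹ + β • v⁻¹ = β • z⁻¹ + α • w⁻¹
  apply mul_left_cancel₀ hu
  apply mul_right_cancel₀ hw
  rw [mul_add, add_mul, mul_add, add_mul]
  rw [hzinv]
  have e1 : u * (α • u⁻¹) * w = α • w := by
    rw [mul_smul_comm, smul_mul_assoc, mul_inv_cancel₀ hu, one_mul]
  have e2 : u * (β • v⁻¹) * w = α • z := by
    rw [mul_smul_comm, smul_mul_assoc, h1, Quaternion.coe_mul_eq_smul, smul_smul,
      mul_div_cancel₀ α hβ]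
  have e3 : u * (β • (u⁻¹ * v * w⁻¹ * ((α / β : ℝ) : Quaternion ℝ))) * w = α • v := by
    have hmid : u * (u⁻¹ * v * w⁻¹ * ((α / β : ℝ) : Quaternion ℝ)) * w = (α / β) • v := by
      rw [Quaternion.mul_coe_eq_smul, mul_smul_comm, smul_mul_assoc]
      congr 1
      simp [mul_assoc, mul_inv_cancel_left₀ hu, inv_mul_cancel₀ hw]
    rw [mul_smul_comm, smul_mul_assoc, hmid, smul_smul, mul_div_cancel₀ α hβ]
  have e4 : u * (α • w⁻¹) * w = α • u := by
    rw [mul_smul_comm, smul_mul_assoc, mul_assoc, inv_mul_cancel₀ hw, mul_one]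
  rw [e1, e2, e3, e4]
  have hzuv : z = u + v - w := by
    rw [hu_def, hv_def, hw_def, hz_def]; abel
  rw [hzuv]
  module
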